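/- For every integer k ≥ 2, every integer r, every τ in the upper half-plane and every u ∈ ℂ, the Wirtinger derivative of R̂_{k,r} with respect to ū satisfies ∂R̂_{k,r}(τ; u)/∂ū = i √(k/τ₂) e^{−πk u₂²/τ₂} [ ϑ_{k,r}(−τ̄; ū/2) − ϑ_{k,−r}(−τ̄; ū/2) ], where τ̄ and ū denote complex conjugates (so −τ̄ lies in the upper half-plane). -/

import Mathlib

noncomputable section

open Complex MeasureTheory Matrix

namespace DSLST

/-- Dedekind eta function. -/
def eta (τ : ℂ) : ℂ :=
  Complex.exp (2 * (Real.pi : ℂ) * Complex.I * τ / 24) *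
    ∏' n : ℕ, (1 - Complex.exp (2 * (Real.pi : ℂ) * Complex.I * τ * ((n : ℂ) + 1)))

/-- Jacobi theta function θ_{ab}(τ; z). -/
def theta (a b : ℤ) (τ z : ℂ) : ℂ :=
  ∑' n : ℤ, Complex.exp ((Real.pi : ℂ) * Complex.I * τ * ((n : ℂ) + (a : ℂ) / 2) ^ 2
    + 2 * (Real.pi : ℂ) * Complex.I * (z + (b : ℂ) / 2) * ((n : ℂ) + (a : ℂ) / 2))

/-- Level-k theta ϑ_{k,r}(τ; z). -/
def thetaLvl (k r : ℤ) (τ z : ℂ) : ℂ :=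
  ∑' n : ℤ, Complex.exp
    (2 * (Real.pi : ℂ) * Complex.I * τ * ((r : ℂ) + 2 * (k : ℂ) * (n : ℂ)) ^ 2 / (4 * (k : ℂ))
      + 2 * (Real.pi : ℂ) * Complex.I * z * ((r : ℂ) + 2 * (k : ℂ) * (n : ℂ)))

/-- ϑ̂_{k,r} = ϑ_{k,r} − ϑ_{k,−r}. -/
def thetaHat (k r : ℤ) (τ z : ℂ) : ℂ := thetaLvl k r τ z - thetaLvl k (-r) τ z

/-- Affine SU(2) character at level k−2: χ^{(k−2)}_{l−1}(τ; z) = i ϑ̂_{k,l}(τ; z/2)/θ₁₁(τ; z). -/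
def chi (k l : ℤ) (τ z : ℂ) : ℂ :=
  Complex.I * thetaHat k l τ (z / 2) / theta 1 1 τ z

/-- N=2 minimal model character C^{m,k}_r[0,0]. -/
def C00 (k m r : ℤ) (τ z : ℂ) : ℂ :=
  if (m - r) % 2 = 0 then
    Complex.I *
      Complex.exp (2 * (Real.pi : ℂ) * Complex.I * τ *
        (((m : ℂ) + 1) ^ 2 - (r : ℂ) ^ 2 - (k : ℂ) ^ 2) / (4 * (k : ℂ))) *
      Complex.exp (2 * (Real.pi : ℂ) * Complex.I * z * (r : ℂ) / (k : ℂ)) *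
      theta 0 0 τ z * theta 1 1 ((k : ℂ) * τ) (((m : ℂ) + 1) * τ) * eta ((k : ℂ) * τ) ^ 3 /
      (theta 1 0 ((k : ℂ) * τ) (z - ((m : ℂ) + 1 + (r : ℂ)) * τ / 2) *
        theta 1 0 ((k : ℂ) * τ) (z + ((m : ℂ) + 1 - (r : ℂ)) * τ / 2) * eta τ ^ 3)
  else 0

/-- N=2 minimal model character C^{m,k}_r[1,1]. -/
def C11 (k m r : ℤ) (τ z : ℂ) : ℂ :=
  - Complex.exp (2 * (Real.pi : ℂ) * Complex.I * τ * (-((k : ℂ) - 2)) / (8 * (k : ℂ))) *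
    Complex.exp (2 * (Real.pi : ℂ) * Complex.I * (z + τ / 2 + 1 / 2) * ((k : ℂ) - 2) / (2 * (k : ℂ))) *
    Complex.exp (-(Real.pi : ℂ) * Complex.I * (r : ℂ) / (k : ℂ)) *
    C00 k m (r + 1) τ (z + τ / 2 + 1 / 2)

/-- Multivariable Appell–Lerch sum μ^{k,j,j'}(τ; v, u, w). -/
def mu (k j j' : ℤ) (τ v u w : ℂ) : ℂ :=
  Complex.exp (2 * (Real.pi : ℂ) * Complex.I * v * (j' : ℂ) / (k : ℂ)) / theta 1 1 τ u *
    ∑' n : ℤ,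
      Complex.exp (2 * (Real.pi : ℂ) * Complex.I * τ * ((n : ℂ) ^ 2 + (j' : ℂ) * (n : ℂ)) / (k : ℂ)) /
          (1 - Complex.exp (2 * (Real.pi : ℂ) * Complex.I * (v + (n : ℂ) * τ))) *
        Complex.exp (2 * (Real.pi : ℂ) * Complex.I * (n : ℂ) *
          (u + (1 - 2 / (k : ℂ)) * w - (1 - 2 / (k : ℂ)) * v)) *
        C11 k (j - 1) (2 * n + j') τ (w - v)

/-- Membership in the lattice ℤτ + ℤ. -/
def inLat (τ z : ℂ) : Prop := ∃ m n : ℤ, z = (m : ℂ) * τ + (n : ℂ)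

/-- Ŝ^{(k)}_{r,r'} = √(2/k)·sin(πrr'/k). -/
def Shat (k r r' : ℤ) : ℂ :=
  ((Real.sqrt (2 / (k : ℝ)) * Real.sin (Real.pi * (r : ℝ) * (r' : ℝ) / (k : ℝ)) : ℝ) : ℂ)

/-- ĥ_{k,r}(τ; u). -/
def hhat (k r : ℤ) (τ u : ℂ) : ℂ :=
  Complex.I * ∫ x : ℝ,
    Complex.exp ((Real.pi : ℂ) * Complex.I * (k : ℂ) * τ * (x : ℂ) ^ 2 / 2) *
      Complex.exp (-(Real.pi : ℂ) * (k : ℂ) * u * (x : ℂ)) *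
      (1 / (1 - Complex.exp ((Real.pi : ℂ) * (x : ℂ) - (Real.pi : ℂ) * Complex.I * (r : ℂ) / (k : ℂ))) -
        1 / (1 - Complex.exp ((Real.pi : ℂ) * (x : ℂ) + (Real.pi : ℂ) * Complex.I * (r : ℂ) / (k : ℂ))))

/-- E(z) = 2∫₀^z e^{−πt²}dt. -/
def Efun (z : ℝ) : ℝ := 2 * ∫ t in (0 : ℝ)..z, Real.exp (-Real.pi * t ^ 2)

/-- A single term of the R̂ series. -/
def Rterm (k : ℤ) (τ u : ℂ) (n : ℤ) : ℂ :=
  ((Real.sign ((n : ℝ) + 1 / 2) -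
      Efun (((n : ℝ) + (k : ℝ) * u.im / τ.im) * Real.sqrt (τ.im / (k : ℝ))) : ℝ) : ℂ) *
    Complex.exp (-(Real.pi : ℂ) * Complex.I * (n : ℂ) ^ 2 * τ / (2 * (k : ℂ))
      - (Real.pi : ℂ) * Complex.I * (n : ℂ) * u)

/-- R̂_{k,r}(τ; u). -/
def Rhat (k r : ℤ) (τ u : ℂ) : ℂ :=
  (∑' m : ℤ, Rterm k τ u (r + 2 * k * m)) - ∑' m : ℤ, Rterm k τ u (-r + 2 * k * m)

/-- Wirtinger derivative ∂/∂ū. -/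
def dzbar (f : ℂ → ℂ) (u : ℂ) : ℂ :=
  (1 / 2) * ((fderiv ℝ f u) 1 + Complex.I * (fderiv ℝ f u) Complex.I)

/-- Ω^{(k,d)}_{r,r'}. -/
def Omega (k d r r' : ℤ) : ℂ :=
  if (r + r') % (2 * d) = 0 ∧ (r - r') % (2 * k / d) = 0 then 1 else 0

/-- Ω̂^{(k,d)}_{r,r'} = Ω^{(k,d)}_{r,r'} − Ω^{(k,d)}_{r,−r'}. -/
def OmegaHat (k d r r' : ℤ) : ℂ := Omega k d r r' - Omega k d r (-r')

/-- Completion μ̃^{k,j,j'}. -/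
def mutilde (k j j' : ℤ) (τ v u w : ℂ) : ℂ :=
  (1 / 2) * (mu k j j' τ v u w + mu k (k - j) (k - j') τ v u w) -
    (1 / 4) * (if (j - j') % 2 = 0 then (1 : ℂ) else 0) *
      (chi k j τ (u - v + w) * Rhat k j' τ (u - v + (1 - 2 / (k : ℂ)) * w) +
        chi k (k - j) τ (u - v + w) * Rhat k (k - j') τ (u - v + (1 - 2 / (k : ℂ)) * w))

/-- μ^{(k,d)} = Σ Ω̂ μ. -/
def muKD (k d : ℤ) (τ v u w : ℂ) : ℂ :=
  ∑ j ∈ Finset.Icc (1 : ℤ) (k - 1), ∑ j' ∈ Finset.Icc (1 : ℤ) (k - 1),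
    OmegaHat k d j j' * mu k j j' τ v u w

/-- μ̃^{(k,d)} = Σ Ω̂ μ̃. -/
def mutildeKD (k d : ℤ) (τ v u w : ℂ) : ℂ :=
  ∑ j ∈ Finset.Icc (1 : ℤ) (k - 1), ∑ j' ∈ Finset.Icc (1 : ℤ) (k - 1),
    OmegaHat k d j j' * mutilde k j j' τ v u w

/-- Weak Jacobi form φ_{−2,1}. -/
def phiM21 (τ z : ℂ) : ℂ := -(theta 1 1 τ z ^ 2) / eta τ ^ 6

/-- Weak Jacobi form φ_{0,1}. -/
def phi01 (τ z : ℂ) : ℂ :=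
  4 * (theta 1 0 τ z ^ 2 / theta 1 0 τ 0 ^ 2 + theta 0 0 τ z ^ 2 / theta 0 0 τ 0 ^ 2 +
    theta 0 1 τ z ^ 2 / theta 0 1 τ 0 ^ 2)

/-- B^{k,j,j'}_{ab}(τ; v,u,w). -/
def Bfun (k j j' a b : ℤ) (τ v u w : ℂ) : ℂ :=
  theta a b τ v * theta a b τ u / eta τ ^ 3 *
    mu k j j' τ (v + ((a : ℂ) - 1) * τ / 2 + ((b : ℂ) - 1) / 2)
      (u + ((a : ℂ) - 1) * τ / 2 + ((b : ℂ) - 1) / 2) w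

/-- B_{(k,d)}(τ; u). -/
def Bkd (k d : ℤ) (τ u : ℂ) : ℂ :=
  (1 / 2) * ((Real.sqrt ((k : ℝ) * τ.im) : ℝ) : ℂ) *
    Complex.exp (-(Real.pi : ℂ) * (k : ℂ) * (u.im : ℂ) ^ 2 / (τ.im : ℂ)) *
    ∑ r ∈ Finset.range (2 * k).toNat, ∑ r' ∈ Finset.range (2 * k).toNat,
      thetaHat k (r : ℤ) τ (u / 2) * (starRingEnd ℂ) (thetaHat k (r' : ℤ) τ (u / 2)) *
        Omega k d (r : ℤ) (r' : ℤ)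

/-- Fundamental domain {aτ + b : a, b ∈ [0,1)} of the torus E(τ). -/
def fundDom (τ : ℂ) : Set ℂ :=
  {z : ℂ | ∃ a b : ℝ, a ∈ Set.Ico (0 : ℝ) 1 ∧ b ∈ Set.Ico (0 : ℝ) 1 ∧ z = (a : ℂ) * τ + (b : ℂ)}

/-- ∫_{E(τ)} B_{(k,d)}(τ; u) du₁du₂/τ₂. -/
def torusInt (k d : ℤ) (τ : ℂ) : ℂ :=
  (1 / (τ.im : ℂ)) * ∫ u in fundDom τ, Bkd k d τ u

/-- The matrix S^{(k)} with indices in ℤ/2kℤ (represented by Fin (2k)). -/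
def Smat (k : ℕ) : Matrix (Fin (2 * k)) (Fin (2 * k)) ℂ :=
  Matrix.of fun r r' => (1 / ((Real.sqrt (2 * (k : ℝ)) : ℝ) : ℂ)) *
    Complex.exp (-(Real.pi : ℂ) * Complex.I * ((r : ℕ) : ℂ) * ((r' : ℕ) : ℂ) / (k : ℂ))

/-- The matrix T^{(k)}. -/
def Tmat (k : ℕ) : Matrix (Fin (2 * k)) (Fin (2 * k)) ℂ :=
  Matrix.of fun r r' => if r = r' then
    Complex.exp ((Real.pi : ℂ) * Complex.I * ((r : ℕ) : ℂ) ^ 2 / (2 * (k : ℂ))) else 0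

/-- The matrix Ω^{(k,d)}. -/
def OmatBig (k d : ℕ) : Matrix (Fin (2 * k)) (Fin (2 * k)) ℂ :=
  Matrix.of fun r r' => Omega (k : ℤ) (d : ℤ) ((r : ℕ) : ℤ) ((r' : ℕ) : ℤ)

/-- The matrix Ŝ^{(k)} on indices {1,…,k−1}. -/
def ShatMat (k : ℕ) : Matrix (Fin (k - 1)) (Fin (k - 1)) ℂ :=
  Matrix.of fun l l' => Shat (k : ℤ) (((l : ℕ) : ℤ) + 1) (((l' : ℕ) : ℤ) + 1)

/-- The matrix Ω̂^{(k,d)} on indices {1,…,k−1}. -/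
def OmatHat (k d : ℕ) : Matrix (Fin (k - 1)) (Fin (k - 1)) ℂ :=
  Matrix.of fun r r' => OmegaHat (k : ℤ) (d : ℤ) (((r : ℕ) : ℤ) + 1) (((r' : ℕ) : ℤ) + 1)

end DSLST

namespace DSLST
open Real Set

abbrev g (x : ℝ) : ℝ := Real.exp (-Real.pi * x ^ 2)

lemma g_cont : Continuous g := by fun_prop

lemma g_int : Integrable g := integrable_exp_neg_mul_sq Real.pi_pos

lemma g_integral : ∫ x : ℝ, g x = 1 := by
  rw [integral_gaussian, div_self Real.pi_ne_zero, Real.sqrt_one]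

lemma hasDerivAt_Efun (x : ℝ) : HasDerivAt Efun (2 * g x) x :=
  ((g_cont.integral_hasStrictDerivAt 0 x).hasDerivAt).const_mul 2

lemma g_integral_Ioi_zero : ∫ x in Ioi (0:ℝ), g x = 1 / 2 := by
  have h1 : ∫ x in Ioi (0:ℝ), g x = ∫ x in Iic (0:ℝ), g x := by
    have := _root_.integral_comp_neg_Ioi (0:ℝ) g
    simp only [neg_zero] at this
    rw [← this]
    congr 1; ext x; simp [g, neg_sq]
  have h2 : (∫ x in Iic (0:ℝ), g x) + ∫ x in Ioi (0:ℝ), g x = 1 := by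
    rw [intervalIntegral.integral_Iic_add_Ioi g_int.integrableOn g_int.integrableOn, g_integral]
  linarith

lemma Efun_eq_setIntegral {x : ℝ} (hx : 0 ≤ x) : Efun x = 2 * ∫ t in Ioc 0 x, g t := by
  rw [Efun, intervalIntegral.integral_of_le hx]

lemma Efun_nonneg {x : ℝ} (hx : 0 ≤ x) : 0 ≤ Efun x := by
  rw [Efun_eq_setIntegral hx]
  positivity

lemma Efun_le_one {x : ℝ} (hx : 0 ≤ x) : Efun x ≤ 1 := by
  rw [Efun_eq_setIntegral hx]
  have : ∫ t in Ioc 0 x, g t ≤ ∫ t in Ioi (0:ℝ), g t := by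
    apply setIntegral_mono_set g_int.integrableOn
    · filter_upwards with t using le_of_lt (Real.exp_pos _)
    · exact HasSubset.Subset.eventuallyLE Ioc_subset_Ioi_self
  rw [g_integral_Ioi_zero] at this
  linarith

lemma one_sub_Efun {x : ℝ} (hx : 0 ≤ x) : 1 - Efun x = 2 * ∫ t in Ioi x, g t := by
  have hsplit : (∫ t in Ioc 0 x, g t) + ∫ t in Ioi x, g t = ∫ t in Ioi (0:ℝ), g t := by
    rw [← setIntegral_union (Ioc_disjoint_Ioi le_rfl) measurableSet_Ioi
      g_int.integrableOn g_int.integrableOn, Ioc_union_Ioi_eq_Ioi hx]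
  rw [Efun_eq_setIntegral hx]
  rw [g_integral_Ioi_zero] at hsplit
  linarith

lemma tail_le {x : ℝ} (hx : 0 ≤ x) : ∫ t in Ioi x, g t ≤ g x := by
  have h1 : ∫ t in Ioi x, g t ≤ ∫ t in Ioi x, g x * Real.exp (-Real.pi * (t - x) ^ 2) := by
    apply setIntegral_mono_on g_int.integrableOn
    · exact (((integrable_exp_neg_mul_sq Real.pi_pos).comp_sub_right x).const_mul _).integrableOn
    · exact measurableSet_Ioi
    · intro t ht
      rw [← Real.exp_add]
      apply Real.exp_le_exp.2
      have ht' : x < t := ht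
      nlinarith [Real.pi_pos, mul_nonneg hx (by linarith : (0:ℝ) ≤ t - x)]
  have h2 : ∫ t in Ioi x, g x * Real.exp (-Real.pi * (t - x) ^ 2) ≤
      ∫ t : ℝ, g x * Real.exp (-Real.pi * (t - x) ^ 2) := by
    apply setIntegral_le_integral (((integrable_exp_neg_mul_sq Real.pi_pos).comp_sub_right x).const_mul _)
    filter_upwards with t
    positivity
  have h3 : ∫ t : ℝ, g x * Real.exp (-Real.pi * (t - x) ^ 2) = g x := by
    rw [MeasureTheory.integral_const_mul]
    have : ∫ t : ℝ, Real.exp (-Real.pi * (t - x) ^ 2) = ∫ t : ℝ, g t :=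
      integral_sub_right_eq_self g x
    rw [this, g_integral, mul_one]
  linarith

lemma Efun_neg (x : ℝ) : Efun (-x) = - Efun x := by
  have : ∫ t in (0:ℝ)..(-x), g t = ∫ t in (0:ℝ)..(-x), g (-t) := by
    congr 1; ext t; simp [g, neg_sq]
  rw [Efun, this, intervalIntegral.integral_comp_neg g, neg_zero, neg_neg,
    intervalIntegral.integral_symm, Efun]
  ring

lemma abs_Efun_le_one (x : ℝ) : |Efun x| ≤ 1 := by
  rcases le_or_gt 0 x with hx | hx
  · rw [_root_.abs_of_nonneg (Efun_nonneg hx)]; exact Efun_le_one hx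
  · have hx' : 0 ≤ -x := by linarith
    have := Efun_neg x
    rw [abs_le]
    constructor
    · nlinarith [Efun_le_one hx', Efun_neg (-x), neg_neg x]
    · nlinarith [Efun_nonneg hx', Efun_neg (-x), neg_neg x]

lemma abs_one_sub_Efun {x : ℝ} (hx : 0 ≤ x) : |1 - Efun x| ≤ 2 * g x := by
  rw [_root_.abs_of_nonneg (by linarith [Efun_le_one hx])]
  have := tail_le hx
  rw [one_sub_Efun hx]
  linarith

lemma abs_neg_one_sub_Efun {x : ℝ} (hx : x ≤ 0) : |-1 - Efun x| ≤ 2 * g x := by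
  have hx' : 0 ≤ -x := by linarith
  have h := abs_one_sub_Efun hx'
  have he : Efun x = - Efun (-x) := by rw [← Efun_neg, neg_neg]
  have hg : g (-x) = g x := by simp [g, neg_sq]
  rw [he]
  rw [hg] at h
  calc |-1 - -Efun (-x)| = |1 - Efun (-x)| := by rw [← abs_neg]; ring_nf
  _ ≤ 2 * g x := h

/-- argument of Efun -/
def aarg (k n : ℤ) (τ z : ℂ) : ℝ :=
  ((n : ℝ) + (k : ℝ) * z.im / τ.im) * Real.sqrt (τ.im / (k : ℝ))

/-- holomorphic factor -/
def Bf (k n : ℤ) (τ z : ℂ) : ℂ :=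
  Complex.exp (-(Real.pi : ℂ) * Complex.I * (n : ℂ) ^ 2 * τ / (2 * (k : ℂ))
      - (Real.pi : ℂ) * Complex.I * (n : ℂ) * z)

/-- real factor -/
def Af (k n : ℤ) (τ z : ℂ) : ℝ := Real.sign ((n : ℝ) + 1 / 2) - Efun (aarg k n τ z)

lemma Rterm_eq (k n : ℤ) (τ z : ℂ) : Rterm k τ z n = (Af k n τ z : ℂ) * Bf k n τ z := rfl

/-- coefficient k/τ₂ · √(τ₂/k) -/
def cc (k : ℤ) (τ : ℂ) : ℝ := (k : ℝ) / τ.im * Real.sqrt (τ.im / (k : ℝ))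

/-- candidate fderiv of `Rterm k τ · n` -/
def Lmap (k n : ℤ) (τ z : ℂ) : ℂ →L[ℝ] ℂ :=
  ((Af k n τ z : ℂ) * (Bf k n τ z * (-(Real.pi : ℂ) * Complex.I * (n : ℂ)))) •
      (ContinuousLinearMap.id ℝ ℂ)
    + (Bf k n τ z * ((-(2 * g (aarg k n τ z) * cc k τ) : ℝ) : ℂ)) •
      (Complex.ofRealCLM.comp Complex.imCLM)

lemma Lmap_apply (k n : ℤ) (τ z h : ℂ) :
    Lmap k n τ z h = (Af k n τ z : ℂ) * (Bf k n τ z * (-(Real.pi : ℂ) * Complex.I * (n : ℂ))) * h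
      + Bf k n τ z * ((-(2 * g (aarg k n τ z) * cc k τ) : ℝ) : ℂ) * ((h.im : ℝ) : ℂ) := by
  simp [Lmap, ContinuousLinearMap.smul_apply]

lemma hasFDerivAt_Rterm (k n : ℤ) (τ z : ℂ) :
    HasFDerivAt (fun w => Rterm k τ w n) (Lmap k n τ z) z := by
  have hinner : HasDerivAt (fun y : ℝ => ((n : ℝ) + (k : ℝ) * y / τ.im) * Real.sqrt (τ.im / (k : ℝ)))
      ((k : ℝ) / τ.im * Real.sqrt (τ.im / (k : ℝ))) z.im := by
    have h0 : (fun y : ℝ => ((n : ℝ) + (k : ℝ) * y / τ.im) * Real.sqrt (τ.im / (k : ℝ)))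
        = fun y => ((k : ℝ) / τ.im * Real.sqrt (τ.im / (k : ℝ))) * y
            + (n : ℝ) * Real.sqrt (τ.im / (k : ℝ)) := by
      funext y; ring
    rw [h0]
    simpa using ((hasDerivAt_id z.im).const_mul
      ((k : ℝ) / τ.im * Real.sqrt (τ.im / (k : ℝ)))).add_const ((n : ℝ) * Real.sqrt (τ.im / (k : ℝ)))
  have hφ : HasDerivAt (fun y : ℝ => Real.sign ((n : ℝ) + 1 / 2)
        - Efun (((n : ℝ) + (k : ℝ) * y / τ.im) * Real.sqrt (τ.im / (k : ℝ))))
      (-(2 * g (aarg k n τ z) * cc k τ)) z.im := by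
    have := ((hasDerivAt_Efun (aarg k n τ z)).comp z.im hinner).const_sub
      (Real.sign ((n : ℝ) + 1 / 2))
    simpa [aarg, cc, mul_comm, mul_assoc, mul_left_comm] using this
  have hA : HasFDerivAt (fun w : ℂ => ((Af k n τ w : ℝ) : ℂ))
      (Complex.ofRealCLM.comp ((-(2 * g (aarg k n τ z) * cc k τ)) • Complex.imCLM)) z := by
    exact Complex.ofRealCLM.hasFDerivAt.comp z
      (hφ.comp_hasFDerivAt z Complex.imCLM.hasFDerivAt)
  have hBd : HasDerivAt (fun w : ℂ => Bf k n τ w)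
      (Bf k n τ z * (-(Real.pi : ℂ) * Complex.I * (n : ℂ))) z := by
    have harg : HasDerivAt (fun w : ℂ => -(Real.pi : ℂ) * Complex.I * (n : ℂ) ^ 2 * τ / (2 * (k : ℂ))
        - (Real.pi : ℂ) * Complex.I * (n : ℂ) * w) (-((Real.pi : ℂ) * Complex.I * (n : ℂ))) z := by
      have h := ((hasDerivAt_id z).const_mul ((Real.pi : ℂ) * Complex.I * (n : ℂ))).const_sub
        (-(Real.pi : ℂ) * Complex.I * (n : ℂ) ^ 2 * τ / (2 * (k : ℂ)))
      rw [mul_one] at h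
      exact h
    have := harg.cexp
    simpa [Bf, mul_comm, mul_assoc, mul_left_comm] using this
  have hB : HasFDerivAt (fun w : ℂ => Bf k n τ w)
      ((ContinuousLinearMap.smulRight (1 : ℂ →L[ℂ] ℂ)
        (Bf k n τ z * (-(Real.pi : ℂ) * Complex.I * (n : ℂ)))).restrictScalars ℝ) z :=
    hBd.hasFDerivAt.restrictScalars ℝ
  have hmul := hA.mul hB
  have : (fun w => Rterm k τ w n) = fun w => ((Af k n τ w : ℝ) : ℂ) * Bf k n τ w := by
    funext w; exact Rterm_eq k n τ w
  rw [this]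
  refine hmul.congr_fderiv ?_
  apply ContinuousLinearMap.ext
  intro h
  simp [Lmap, Complex.real_smul]
  ring

lemma norm_Bf {k : ℤ} (hk : (0:ℝ) < (k:ℝ)) (n : ℤ) (τ z : ℂ) :
    ‖Bf k n τ z‖ = Real.exp (π * (n:ℝ)^2 * τ.im / (2*(k:ℝ)) + π * (n:ℝ) * z.im) := by
  rw [Bf, Complex.norm_exp]
  congr 1
  have h1 : -(Real.pi : ℂ) * Complex.I * (n : ℂ) ^ 2 * τ / (2 * (k : ℂ))
      = ((-(π * (n:ℝ)^2 / (2*(k:ℝ))) : ℝ) : ℂ) * (Complex.I * τ) := by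
    have : ((k:ℝ):ℂ) ≠ 0 := by exact_mod_cast hk.ne'
    push_cast
    field_simp
  have h2 : (Real.pi : ℂ) * Complex.I * (n : ℂ) * z = ((π * (n:ℝ) : ℝ) : ℂ) * (Complex.I * z) := by
    push_cast; ring
  rw [h1, h2, Complex.sub_re, Complex.re_ofReal_mul, Complex.re_ofReal_mul]
  simp only [Complex.mul_re, Complex.I_re, Complex.I_im, zero_mul, one_mul, zero_sub]
  field_simp
  ring



def N0 (k : ℤ) (τ u : ℂ) : ℤ := ⌈(k:ℝ) * (|u.im| + 1) / τ.im⌉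

def Ybnd (k : ℤ) (τ u : ℂ) (n : ℤ) : ℝ :=
  Real.exp (-π * (τ.im / (2*(k:ℝ)) * (n:ℝ)^2 - 2 * ((|u.im|+1)/2) * |(n:ℝ)|))
def Xbnd (k : ℤ) (τ u : ℂ) (n : ℤ) : ℝ :=
  Real.exp (π * (τ.im / (2*(k:ℝ)) * (n:ℝ)^2 + (|u.im|+1) * |(n:ℝ)|))
def badb (k : ℤ) (τ u : ℂ) (n : ℤ) : ℝ := if |n| ≤ N0 k τ u then Xbnd k τ u n else 0

lemma badb_nonneg (k : ℤ) (τ u : ℂ) (n : ℤ) : 0 ≤ badb k τ u n := by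
  rw [badb]; split
  · exact (Real.exp_pos _).le
  · exact le_refl 0

lemma zim_le {u z : ℂ} (hz : z ∈ Metric.ball u 1) : |z.im| ≤ |u.im| + 1 := by
  have h1 : |z.im - u.im| ≤ ‖z - u‖ := by
    rw [← Complex.sub_im]; exact Complex.abs_im_le_norm _
  have h2 : ‖z - u‖ < 1 := by
    rw [← Complex.dist_eq]; exact Metric.mem_ball.1 hz
  calc |z.im| ≤ |u.im| + |z.im - u.im| := by
        have := abs_sub_abs_le_abs_sub z.im u.im; linarith [abs_sub_comm z.im u.im ▸ this]
  _ ≤ |u.im| + 1 := by linarith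

lemma norm_Bf_le {k : ℤ} (hk : (0:ℝ) < (k:ℝ)) {τ u z : ℂ} (hz : z ∈ Metric.ball u 1) (n : ℤ) :
    ‖Bf k n τ z‖ ≤ Xbnd k τ u n := by
  rw [norm_Bf hk, Xbnd]
  apply Real.exp_le_exp.2
  have h1 : (n:ℝ) * z.im ≤ |(n:ℝ)| * (|u.im| + 1) := by
    calc (n:ℝ) * z.im ≤ |(n:ℝ) * z.im| := le_abs_self _
    _ = |(n:ℝ)| * |z.im| := abs_mul _ _
    _ ≤ |(n:ℝ)| * (|u.im| + 1) := mul_le_mul_of_nonneg_left (zim_le hz) (abs_nonneg _)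
  have e1 : π * (n:ℝ)^2 * τ.im / (2*(k:ℝ)) = π * (τ.im/(2*(k:ℝ)) * (n:ℝ)^2) := by ring
  have e2 := mul_le_mul_of_nonneg_left h1 Real.pi_pos.le
  linarith

/-- the key Gaussian cancellation in the good regime -/
lemma gB_le_Y {k : ℤ} (hk2 : 2 ≤ k) {τ u z : ℂ} (hτ : 0 < τ.im)
    (hz : z ∈ Metric.ball u 1) {n : ℤ} (hn : N0 k τ u < |n|) :
    g (aarg k n τ z) * ‖Bf k n τ z‖ ≤ Ybnd k τ u n := by
  have hk : (0:ℝ) < (k:ℝ) := by exact_mod_cast (by omega : (0:ℤ) < k)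
  rw [norm_Bf hk, Ybnd, g, ← Real.exp_add]
  apply Real.exp_le_exp.2
  have hsq : (aarg k n τ z)^2 = ((n:ℝ) + (k:ℝ) * z.im / τ.im)^2 * (τ.im / (k:ℝ)) := by
    rw [aarg, mul_pow, Real.sq_sqrt (by positivity)]
  have hexp : ((n:ℝ) + (k:ℝ) * z.im / τ.im)^2 * (τ.im / (k:ℝ))
      = (n:ℝ)^2 * τ.im / (k:ℝ) + 2 * (n:ℝ) * z.im + (k:ℝ) * z.im^2 / τ.im := by
    field_simp
    ring
  rw [hsq, hexp]
  have h1 : -((n:ℝ) * z.im) ≤ |(n:ℝ)| * (|u.im| + 1) := by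
    calc -((n:ℝ) * z.im) ≤ |(n:ℝ) * z.im| := neg_le_abs _
    _ = |(n:ℝ)| * |z.im| := abs_mul _ _
    _ ≤ |(n:ℝ)| * (|u.im| + 1) := mul_le_mul_of_nonneg_left (zim_le hz) (abs_nonneg _)
  have h2 : 0 ≤ (k:ℝ) * z.im^2 / τ.im := by positivity
  have e1 : π * (n:ℝ)^2 * τ.im / (2*(k:ℝ)) = π * (τ.im/(2*(k:ℝ)) * (n:ℝ)^2) := by ring
  have e2 : -π * ((n:ℝ)^2 * τ.im / (k:ℝ)) = -2 * (π * (τ.im/(2*(k:ℝ)) * (n:ℝ)^2)) := by ring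
  have e3 := mul_le_mul_of_nonneg_left h1 Real.pi_pos.le
  have e4 := mul_nonneg Real.pi_pos.le h2
  nlinarith [e1, e2, e3, e4]

/-- in the good regime the sign matches and `|Af| ≤ 2 g (aarg)` -/
lemma abs_Af_le {k : ℤ} (hk2 : 2 ≤ k) {τ u z : ℂ} (hτ : 0 < τ.im)
    (hz : z ∈ Metric.ball u 1) {n : ℤ} (hn : N0 k τ u < |n|) :
    |Af k n τ z| ≤ 2 * g (aarg k n τ z) := by
  have hk : (0:ℝ) < (k:ℝ) := by exact_mod_cast (by omega : (0:ℤ) < k)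
  have hN0 : (0:ℤ) ≤ N0 k τ u := Int.ceil_nonneg (by positivity)
  have hceil : (k:ℝ) * (|u.im| + 1) / τ.im ≤ (N0 k τ u : ℝ) := Int.le_ceil _
  have hzim := zim_le hz
  have hkz : |(k:ℝ) * z.im / τ.im| ≤ (N0 k τ u : ℝ) := by
    rw [abs_div, abs_mul, abs_of_pos hk, abs_of_pos hτ]
    calc (k:ℝ) * |z.im| / τ.im ≤ (k:ℝ) * (|u.im| + 1) / τ.im := by gcongr
    _ ≤ _ := hceil
  rcases lt_or_ge n 0 with hneg | hpos
  · -- n ≤ -N0 - 1 : a ≤ 0, sign = -1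
    have hn' : n ≤ -(N0 k τ u) - 1 := by
      rw [abs_of_neg hneg] at hn; omega
    have hsign : Real.sign ((n : ℝ) + 1 / 2) = -1 := by
      apply Real.sign_of_neg
      have : (n:ℝ) ≤ -1 := by exact_mod_cast (by omega : n ≤ -1)
      linarith
    have ha : aarg k n τ z ≤ 0 := by
      rw [aarg]
      apply mul_nonpos_of_nonpos_of_nonneg _ (Real.sqrt_nonneg _)
      have h1 : (n:ℝ) ≤ -(N0 k τ u : ℝ) - 1 := by exact_mod_cast hn'
      have h2 := le_abs_self ((k:ℝ) * z.im / τ.im)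
      linarith [hkz]
    rw [Af, hsign]
    exact abs_neg_one_sub_Efun ha
  · -- n ≥ N0 + 1 : a ≥ 0, sign = 1
    have hn' : N0 k τ u + 1 ≤ n := by
      rw [abs_of_nonneg hpos] at hn; omega
    have hsign : Real.sign ((n : ℝ) + 1 / 2) = 1 := by
      apply Real.sign_of_pos
      have : (0:ℝ) ≤ (n:ℝ) := by exact_mod_cast hpos
      linarith
    have ha : 0 ≤ aarg k n τ z := by
      rw [aarg]
      apply mul_nonneg _ (Real.sqrt_nonneg _)
      have h1 : (N0 k τ u : ℝ) + 1 ≤ (n:ℝ) := by exact_mod_cast hn'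
      have h2 := le_abs_self ((k:ℝ) * z.im / τ.im)
      linarith [hkz, neg_abs_le ((k:ℝ) * z.im / τ.im)]
    rw [Af, hsign]
    exact abs_one_sub_Efun ha

lemma abs_Af_le_two (k n : ℤ) (τ z : ℂ) : |Af k n τ z| ≤ 2 := by
  have h1 : |Real.sign ((n : ℝ) + 1 / 2)| ≤ 1 := by
    rcases lt_trichotomy ((n : ℝ) + 1 / 2) 0 with h | h | h
    · rw [Real.sign_of_neg h]; norm_num
    · rw [Real.sign, if_neg (by linarith), if_neg (by linarith)]; norm_num
    · rw [Real.sign_of_pos h]; norm_num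
  calc |Af k n τ z| ≤ |Real.sign ((n : ℝ) + 1 / 2)| + |Efun (aarg k n τ z)| := abs_sub _ _
  _ ≤ 2 := by linarith [abs_Efun_le_one (aarg k n τ z)]

lemma g_le_one (x : ℝ) : g x ≤ 1 := by
  rw [g, ← Real.exp_zero]
  apply Real.exp_le_exp.2
  nlinarith [Real.pi_pos, sq_nonneg x]


lemma cc_nonneg {k : ℤ} (hk : (0:ℝ) < (k:ℝ)) {τ : ℂ} (hτ : 0 < τ.im) : 0 ≤ cc k τ := by
  rw [cc]; positivity

/-- master bound valid on the ball -/
lemma Lmap_norm_le {k : ℤ} (hk2 : 2 ≤ k) {τ u z : ℂ} (hτ : 0 < τ.im)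
    (hz : z ∈ Metric.ball u 1) (n : ℤ) :
    ‖Lmap k n τ z‖ ≤ (π * |(n:ℝ)| + cc k τ) * (2 * (Ybnd k τ u n + badb k τ u n)) := by
  have hk : (0:ℝ) < (k:ℝ) := by exact_mod_cast (by omega : (0:ℤ) < k)
  have hY : 0 ≤ Ybnd k τ u n := (Real.exp_pos _).le
  have hbad := badb_nonneg k τ u n
  have hgB : g (aarg k n τ z) * ‖Bf k n τ z‖ ≤ Ybnd k τ u n + badb k τ u n := by
    rcases le_or_gt (|n|) (N0 k τ u) with hsmall | hbig
    · have : g (aarg k n τ z) * ‖Bf k n τ z‖ ≤ 1 * Xbnd k τ u n :=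
        mul_le_mul (g_le_one _) (norm_Bf_le hk hz n) (norm_nonneg _) zero_le_one
      rw [badb, if_pos hsmall]
      linarith
    · linarith [gB_le_Y hk2 hτ hz hbig]
  have hAB : |Af k n τ z| * ‖Bf k n τ z‖ ≤ 2 * (Ybnd k τ u n + badb k τ u n) := by
    rcases le_or_gt (|n|) (N0 k τ u) with hsmall | hbig
    · have : |Af k n τ z| * ‖Bf k n τ z‖ ≤ 2 * Xbnd k τ u n :=
        mul_le_mul (abs_Af_le_two k n τ z) (norm_Bf_le hk hz n) (norm_nonneg _) (by norm_num)
      rw [badb, if_pos hsmall]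
      linarith
    · have h1 : |Af k n τ z| * ‖Bf k n τ z‖ ≤ (2 * g (aarg k n τ z)) * ‖Bf k n τ z‖ :=
        mul_le_mul_of_nonneg_right (abs_Af_le hk2 hτ hz hbig) (norm_nonneg _)
      have h2 := gB_le_Y hk2 hτ hz hbig
      nlinarith [norm_nonneg (Bf k n τ z)]
  have hcc := cc_nonneg hk hτ
  have hg : 0 ≤ g (aarg k n τ z) := (Real.exp_pos _).le
  apply ContinuousLinearMap.opNorm_le_bound _
    (mul_nonneg (add_nonneg (by positivity) hcc) (by positivity))
  intro h
  have happ : Lmap k n τ z h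
      = (Af k n τ z : ℂ) * (Bf k n τ z * (-(Real.pi : ℂ) * Complex.I * (n : ℂ))) * h
      + Bf k n τ z * ((-(2 * g (aarg k n τ z) * cc k τ) : ℝ) : ℂ) * ((h.im : ℝ) : ℂ) := by
    simp [Lmap, ContinuousLinearMap.smul_apply]
  rw [happ]
  have e1 : ‖(Af k n τ z : ℂ) * (Bf k n τ z * (-(Real.pi : ℂ) * Complex.I * (n : ℂ))) * h‖
      = |Af k n τ z| * (‖Bf k n τ z‖ * (π * |(n:ℝ)|)) * ‖h‖ := by
    simp only [norm_mul, Complex.norm_real, Real.norm_eq_abs, Complex.norm_intCast,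
      norm_neg, Complex.norm_I, abs_of_pos Real.pi_pos]
    ring
  have e2 : ‖Bf k n τ z * ((-(2 * g (aarg k n τ z) * cc k τ) : ℝ) : ℂ) * ((h.im : ℝ) : ℂ)‖
      = ‖Bf k n τ z‖ * (2 * g (aarg k n τ z) * cc k τ) * |h.im| := by
    simp only [norm_mul, Complex.norm_real, Real.norm_eq_abs, abs_neg, abs_mul,
      _root_.abs_of_nonneg hg, _root_.abs_of_nonneg hcc]
    norm_num
  calc ‖(Af k n τ z : ℂ) * (Bf k n τ z * (-(Real.pi : ℂ) * Complex.I * (n : ℂ))) * h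
      + Bf k n τ z * ((-(2 * g (aarg k n τ z) * cc k τ) : ℝ) : ℂ) * ((h.im : ℝ) : ℂ)‖
      ≤ |Af k n τ z| * (‖Bf k n τ z‖ * (π * |(n:ℝ)|)) * ‖h‖
      + ‖Bf k n τ z‖ * (2 * g (aarg k n τ z) * cc k τ) * |h.im| := by
        rw [← e1, ← e2]; exact norm_add_le _ _
  _ ≤ |Af k n τ z| * (‖Bf k n τ z‖ * (π * |(n:ℝ)|)) * ‖h‖
      + ‖Bf k n τ z‖ * (2 * g (aarg k n τ z) * cc k τ) * ‖h‖ := by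
        have him : |h.im| ≤ ‖h‖ := Complex.abs_im_le_norm h
        have hnn : 0 ≤ ‖Bf k n τ z‖ * (2 * g (aarg k n τ z) * cc k τ) := by positivity
        nlinarith [hnn, him]
  _ ≤ (π * |(n:ℝ)| + cc k τ) * (2 * (Ybnd k τ u n + badb k τ u n)) * ‖h‖ := by
        have h3 : |Af k n τ z| * ‖Bf k n τ z‖ * (π * |(n:ℝ)|)
            ≤ 2 * (Ybnd k τ u n + badb k τ u n) * (π * |(n:ℝ)|) :=
          mul_le_mul_of_nonneg_right hAB (by positivity)
        have h4 : g (aarg k n τ z) * ‖Bf k n τ z‖ * (2 * cc k τ)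
            ≤ (Ybnd k τ u n + badb k τ u n) * (2 * cc k τ) :=
          mul_le_mul_of_nonneg_right hgB (by positivity)
        have hh := norm_nonneg h
        nlinarith [h3, h4]

lemma summable_bad (k : ℤ) (τ u : ℂ) (f : ℤ → ℝ) :
    Summable (fun n : ℤ => f n * badb k τ u n) := by
  apply summable_of_finite_support
  apply Set.Finite.subset (Set.finite_Icc (-(N0 k τ u)) (N0 k τ u))
  intro n hn
  simp only [Function.mem_support] at hn
  have hle : |n| ≤ N0 k τ u := by
    by_contra hgt
    apply hn
    rw [badb, if_neg hgt, mul_zero]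
  simp only [Set.mem_Icc]
  rw [abs_le] at hle
  exact hle

lemma summable_master {k : ℤ} (hk2 : 2 ≤ k) {τ : ℂ} (hτ : 0 < τ.im) (u : ℂ) :
    Summable (fun n : ℤ => (π * |(n:ℝ)| + cc k τ) * (2 * (Ybnd k τ u n + badb k τ u n))) := by
  have hk : (0:ℝ) < (k:ℝ) := by exact_mod_cast (by omega : (0:ℤ) < k)
  have hT : 0 < τ.im / (2*(k:ℝ)) := by positivity
  have hj1 := (summable_pow_mul_jacobiTheta₂_term_bound ((|u.im|+1)/2) hT 1).mul_left (2*π)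
  have hj0 := (summable_pow_mul_jacobiTheta₂_term_bound ((|u.im|+1)/2) hT 0).mul_left
    (2 * cc k τ)
  have hb := summable_bad k τ u (fun n => (π * |(n:ℝ)| + cc k τ) * 2)
  apply ((hj1.add hj0).add hb).congr
  intro n
  rw [Ybnd, badb]
  push_cast
  ring


lemma AB_le {k : ℤ} (hk2 : 2 ≤ k) {τ u z : ℂ} (hτ : 0 < τ.im)
    (hz : z ∈ Metric.ball u 1) (n : ℤ) :
    |Af k n τ z| * ‖Bf k n τ z‖ ≤ 2 * (Ybnd k τ u n + badb k τ u n) := by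
  have hk : (0:ℝ) < (k:ℝ) := by exact_mod_cast (by omega : (0:ℤ) < k)
  have hY : 0 ≤ Ybnd k τ u n := (Real.exp_pos _).le
  have hbad := badb_nonneg k τ u n
  rcases le_or_gt (|n|) (N0 k τ u) with hsmall | hbig
  · have : |Af k n τ z| * ‖Bf k n τ z‖ ≤ 2 * Xbnd k τ u n :=
      mul_le_mul (abs_Af_le_two k n τ z) (norm_Bf_le hk hz n) (norm_nonneg _) (by norm_num)
    rw [badb, if_pos hsmall]
    linarith
  · have h1 : |Af k n τ z| * ‖Bf k n τ z‖ ≤ (2 * g (aarg k n τ z)) * ‖Bf k n τ z‖ :=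
      mul_le_mul_of_nonneg_right (abs_Af_le hk2 hτ hz hbig) (norm_nonneg _)
    have h2 := gB_le_Y hk2 hτ hz hbig
    nlinarith [norm_nonneg (Bf k n τ z)]

lemma summable_YB {k : ℤ} (hk2 : 2 ≤ k) {τ : ℂ} (hτ : 0 < τ.im) (u : ℂ) :
    Summable (fun n : ℤ => 2 * (Ybnd k τ u n + badb k τ u n)) := by
  have hk : (0:ℝ) < (k:ℝ) := by exact_mod_cast (by omega : (0:ℤ) < k)
  have hT : 0 < τ.im / (2*(k:ℝ)) := by positivity
  have hj0 := (summable_pow_mul_jacobiTheta₂_term_bound ((|u.im|+1)/2) hT 0).mul_left 2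
  have hb := summable_bad k τ u (fun _ => 2)
  apply (hj0.add hb).congr
  intro n
  rw [Ybnd]
  push_cast
  ring

lemma inj_aff {k : ℤ} (hk2 : 2 ≤ k) (r : ℤ) : Function.Injective (fun m : ℤ => r + 2*k*m) := by
  intro a b hab
  simp only at hab
  have h2k : (2*k) ≠ 0 := by omega
  have : 2*k*a = 2*k*b := by omega
  exact mul_left_cancel₀ h2k this

lemma summable_Rterm {k : ℤ} (hk2 : 2 ≤ k) {τ : ℂ} (hτ : 0 < τ.im) (r : ℤ) (u : ℂ) :
    Summable (fun m : ℤ => Rterm k τ u (r + 2*k*m)) := by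
  apply Summable.of_norm
  apply Summable.of_nonneg_of_le (fun m => norm_nonneg _)
    (fun m => ?_) (((summable_YB hk2 hτ u).comp_injective (inj_aff hk2 r)))
  have : ‖Rterm k τ u (r + 2*k*m)‖ = |Af k (r + 2*k*m) τ u| * ‖Bf k (r + 2*k*m) τ u‖ := by
    rw [Rterm_eq, norm_mul, Complex.norm_real, Real.norm_eq_abs]
  rw [this]
  exact AB_le hk2 hτ (Metric.mem_ball_self one_pos) _

lemma summable_Lmap {k : ℤ} (hk2 : 2 ≤ k) {τ : ℂ} (hτ : 0 < τ.im) (r : ℤ) (u : ℂ) :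
    Summable (fun m : ℤ => Lmap k (r + 2*k*m) τ u) := by
  apply Summable.of_norm
  apply Summable.of_nonneg_of_le (fun m => norm_nonneg _) (fun m => ?_)
    (((summable_master hk2 hτ u).comp_injective (inj_aff hk2 r)))
  exact Lmap_norm_le hk2 hτ (Metric.mem_ball_self one_pos) _

lemma hasFDerivAt_series {k : ℤ} (hk2 : 2 ≤ k) {τ : ℂ} (hτ : 0 < τ.im) (r : ℤ) (u : ℂ) :
    HasFDerivAt (fun z => ∑' m : ℤ, Rterm k τ z (r + 2*k*m))
      (∑' m : ℤ, Lmap k (r + 2*k*m) τ u) u := by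
  apply hasFDerivAt_tsum_of_isPreconnected
    (((summable_master hk2 hτ u).comp_injective (inj_aff hk2 r)))
    Metric.isOpen_ball (convex_ball u (1:ℝ)).isPreconnected
    (fun m z _ => hasFDerivAt_Rterm k (r + 2*k*m) τ z)
    (fun m z hz => Lmap_norm_le hk2 hτ hz _)
    (Metric.mem_ball_self one_pos)
    (summable_Rterm hk2 hτ r u)
    (Metric.mem_ball_self one_pos)

lemma term_id {k : ℤ} (hk2 : 2 ≤ k) {τ : ℂ} (hτ : 0 < τ.im) (n : ℤ) (u : ℂ) :
    ((g (aarg k n τ u) : ℝ) : ℂ) * Bf k n τ u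
      = Complex.exp (-(Real.pi : ℂ) * (k : ℂ) * (u.im : ℂ) ^ 2 / (τ.im : ℂ)) *
        Complex.exp (2 * (Real.pi : ℂ) * Complex.I * (-(starRingEnd ℂ τ)) * (-(n:ℂ)) ^ 2 / (4 * (k : ℂ))
          + 2 * (Real.pi : ℂ) * Complex.I * ((starRingEnd ℂ u) / 2) * (-(n:ℂ))) := by
  have hk : (0:ℝ) < (k:ℝ) := by exact_mod_cast (by omega : (0:ℤ) < k)
  have hkc : ((k:ℝ):ℂ) ≠ 0 := by exact_mod_cast hk.ne'
  have htc : ((τ.im:ℝ):ℂ) ≠ 0 := by exact_mod_cast hτ.ne'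
  have hsq : (aarg k n τ u)^2
      = (n:ℝ)^2 * τ.im / (k:ℝ) + 2 * (n:ℝ) * u.im + (k:ℝ) * u.im^2 / τ.im := by
    rw [aarg, mul_pow, Real.sq_sqrt (by positivity)]
    field_simp
    ring
  rw [g, Complex.ofReal_exp, Bf, ← Complex.exp_add, ← Complex.exp_add]
  congr 1
  rw [hsq]
  set t1 := τ.re with ht1
  set t2 := τ.im with ht2
  set u1 := u.re with hu1
  set u2 := u.im with hu2
  have hτeq : τ = (t1:ℂ) + (t2:ℂ) * Complex.I := (Complex.re_add_im τ).symm
  have hueq : u = (u1:ℂ) + (u2:ℂ) * Complex.I := (Complex.re_add_im u).symm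
  rw [hτeq, hueq]
  simp only [map_add, _root_.map_mul, Complex.conj_ofReal, Complex.conj_I]
  push_cast
  have htc2 : (t2:ℂ) ≠ 0 := htc
  linear_combination (-(Real.pi:ℂ) * (n:ℂ)^2 * (t2:ℂ) / (k:ℂ)
    - 2 * (Real.pi:ℂ) * (n:ℂ) * (u2:ℂ)) * Complex.I_sq

lemma Lmap_one_I (k n : ℤ) (τ u : ℂ) :
    (1/2 : ℂ) * (Lmap k n τ u 1 + Complex.I * Lmap k n τ u Complex.I)
      = -Complex.I * (cc k τ : ℂ) * ((g (aarg k n τ u) : ℝ) : ℂ) * Bf k n τ u := by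
  have happ : ∀ h : ℂ, Lmap k n τ u h
      = (Af k n τ u : ℂ) * (Bf k n τ u * (-(Real.pi : ℂ) * Complex.I * (n : ℂ))) * h
      + Bf k n τ u * ((-(2 * g (aarg k n τ u) * cc k τ) : ℝ) : ℂ) * ((h.im : ℝ) : ℂ) := by
    intro h
    simp [Lmap, ContinuousLinearMap.smul_apply]
  rw [happ 1, happ Complex.I]
  simp only [Complex.one_im, Complex.I_im, Complex.ofReal_zero, Complex.ofReal_one,
    mul_zero, add_zero, mul_one]
  push_cast
  linear_combination ((1/2 : ℂ) * ((Af k n τ u : ℂ) *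
    (Bf k n τ u * (-(Real.pi : ℂ) * Complex.I * (n : ℂ))))) * Complex.I_sq

lemma cc_eq {k : ℤ} (hk2 : 2 ≤ k) {τ : ℂ} (hτ : 0 < τ.im) :
    cc k τ = Real.sqrt ((k:ℝ) / τ.im) := by
  have hk : (0:ℝ) < (k:ℝ) := by exact_mod_cast (by omega : (0:ℤ) < k)
  have h2 : ((k:ℝ)/τ.im)^2 * (τ.im/(k:ℝ)) = (k:ℝ)/τ.im := by field_simp
  calc cc k τ = Real.sqrt (((k:ℝ)/τ.im)^2) * Real.sqrt (τ.im/(k:ℝ)) := by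
        rw [Real.sqrt_sq (by positivity), cc]
  _ = Real.sqrt (((k:ℝ)/τ.im)^2 * (τ.im/(k:ℝ))) := (Real.sqrt_mul (sq_nonneg _) _).symm
  _ = Real.sqrt ((k:ℝ)/τ.im) := by rw [h2]

lemma tsum_clm_apply {L : ℤ → (ℂ →L[ℝ] ℂ)} (hL : Summable L) (h : ℂ) :
    (∑' m : ℤ, L m) h = ∑' m : ℤ, L m h :=
  ((ContinuousLinearMap.apply ℝ ℂ h).map_tsum hL)

lemma series_deriv_eval {k : ℤ} (hk2 : 2 ≤ k) {τ : ℂ} (hτ : 0 < τ.im) (r : ℤ) (u : ℂ) :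
    (1/2 : ℂ) * ((∑' m : ℤ, Lmap k (r + 2*k*m) τ u) 1
        + Complex.I * (∑' m : ℤ, Lmap k (r + 2*k*m) τ u) Complex.I)
      = -Complex.I * ((Real.sqrt ((k:ℝ) / τ.im) : ℝ) : ℂ)
        * Complex.exp (-(Real.pi : ℂ) * (k : ℂ) * (u.im : ℂ) ^ 2 / (τ.im : ℂ))
        * thetaLvl k (-r) (-(starRingEnd ℂ τ)) ((starRingEnd ℂ u) / 2) := by
  have hL := summable_Lmap hk2 hτ r u
  have h1 : Summable (fun m : ℤ => Lmap k (r + 2*k*m) τ u 1) :=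
    hL.map (ContinuousLinearMap.apply ℝ ℂ (1:ℂ)) (ContinuousLinearMap.apply ℝ ℂ (1:ℂ)).cont
  have h2 : Summable (fun m : ℤ => Lmap k (r + 2*k*m) τ u Complex.I) :=
    hL.map (ContinuousLinearMap.apply ℝ ℂ Complex.I) (ContinuousLinearMap.apply ℝ ℂ Complex.I).cont
  set C : ℂ := -Complex.I * ((Real.sqrt ((k:ℝ) / τ.im) : ℝ) : ℂ)
        * Complex.exp (-(Real.pi : ℂ) * (k : ℂ) * (u.im : ℂ) ^ 2 / (τ.im : ℂ)) with hC
  set F : ℤ → ℂ := fun j => Complex.exp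
    (2 * (Real.pi : ℂ) * Complex.I * (-(starRingEnd ℂ τ)) * (((-r : ℤ) : ℂ) + 2 * (k : ℂ) * (j : ℂ)) ^ 2 / (4 * (k : ℂ))
      + 2 * (Real.pi : ℂ) * Complex.I * ((starRingEnd ℂ u) / 2) * (((-r : ℤ) : ℂ) + 2 * (k : ℂ) * (j : ℂ))) with hF
  calc (1/2 : ℂ) * ((∑' m : ℤ, Lmap k (r + 2*k*m) τ u) 1
        + Complex.I * (∑' m : ℤ, Lmap k (r + 2*k*m) τ u) Complex.I)
      = ∑' m : ℤ, (1/2 : ℂ) * (Lmap k (r + 2*k*m) τ u 1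
          + Complex.I * Lmap k (r + 2*k*m) τ u Complex.I) := by
        rw [tsum_clm_apply hL 1, tsum_clm_apply hL Complex.I, ← tsum_mul_left (a := Complex.I),
          ← Summable.tsum_add h1 (h2.mul_left Complex.I), ← tsum_mul_left (a := (1/2 : ℂ))]
  _ = ∑' m : ℤ, C * F (-m) := by
        apply tsum_congr
        intro m
        rw [Lmap_one_I k (r + 2*k*m) τ u, cc_eq hk2 hτ]
        rw [show (-Complex.I * ((Real.sqrt ((k:ℝ)/τ.im) : ℝ) : ℂ))
            * ((g (aarg k (r + 2*k*m) τ u) : ℝ) : ℂ) * Bf k (r + 2*k*m) τ u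
          = (-Complex.I * ((Real.sqrt ((k:ℝ)/τ.im) : ℝ) : ℂ))
            * (((g (aarg k (r + 2*k*m) τ u) : ℝ) : ℂ) * Bf k (r + 2*k*m) τ u) from by ring,
          term_id hk2 hτ (r + 2*k*m) u]
        rw [hC, hF]
        have harg : (2 * (Real.pi : ℂ) * Complex.I * (-(starRingEnd ℂ τ)) * (-(((r + 2*k*m : ℤ)):ℂ)) ^ 2 / (4 * (k : ℂ))
                + 2 * (Real.pi : ℂ) * Complex.I * ((starRingEnd ℂ u) / 2) * (-(((r + 2*k*m : ℤ)):ℂ)))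
            = (2 * (Real.pi : ℂ) * Complex.I * (-(starRingEnd ℂ τ)) * (((-r : ℤ) : ℂ) + 2 * (k : ℂ) * (((-m : ℤ)) : ℂ)) ^ 2 / (4 * (k : ℂ))
                + 2 * (Real.pi : ℂ) * Complex.I * ((starRingEnd ℂ u) / 2) * (((-r : ℤ) : ℂ) + 2 * (k : ℂ) * (((-m : ℤ)) : ℂ))) := by
          push_cast
          ring
        rw [harg]
        ring
  _ = C * ∑' m : ℤ, F (-m) := tsum_mul_left
  _ = C * thetaLvl k (-r) (-(starRingEnd ℂ τ)) ((starRingEnd ℂ u) / 2) := by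
        congr 1
        rw [thetaLvl]
        exact (Equiv.neg ℤ).tsum_eq F

/-- The Wirtinger derivative ∂/∂ū of R̂_{k,r}(τ; ·). -/
theorem Rhat_dzbar (k : ℤ) (hk : 2 ≤ k) (r : ℤ) (τ : ℂ) (hτ : 0 < τ.im) (u : ℂ) :
    dzbar (fun z => Rhat k r τ z) u =
      Complex.I * ((Real.sqrt ((k : ℝ) / τ.im) : ℝ) : ℂ) *
        Complex.exp (-(Real.pi : ℂ) * (k : ℂ) * (u.im : ℂ) ^ 2 / (τ.im : ℂ)) *
        (thetaLvl k r (-(starRingEnd ℂ τ)) ((starRingEnd ℂ u) / 2) -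
          thetaLvl k (-r) (-(starRingEnd ℂ τ)) ((starRingEnd ℂ u) / 2)) := by
  have hd1 := hasFDerivAt_series hk hτ r u
  have hd2 := hasFDerivAt_series hk hτ (-r) u
  have hd : HasFDerivAt (fun z => Rhat k r τ z)
      ((∑' m : ℤ, Lmap k (r + 2*k*m) τ u) - ∑' m : ℤ, Lmap k (-r + 2*k*m) τ u) u :=
    HasFDerivAt.sub hd1 hd2
  rw [dzbar, hd.fderiv]
  simp only [ContinuousLinearMap.coe_sub', Pi.sub_apply]
  have e1 := series_deriv_eval hk hτ r u
  have e2 := series_deriv_eval hk hτ (-r) u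
  rw [neg_neg] at e2
  linear_combination e1 - e2

end DSLST
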